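/- Let X be a real inner product space. Then for all x, y ∈ X \ {0}, one has ‖x/‖x‖ − y/‖y‖‖ ≤ 2‖x−y‖/(‖x‖+‖y‖); in particular, if X is nontrivial, DW(X) = 2. -/

import Mathlib

/-- In a real inner product space, `‖x/‖x‖ − y/‖y‖‖ ≤ 2‖x−y‖/(‖x‖+‖y‖)` for all
nonzero `x, y`; in particular, if the space is nontrivial, `DW(X) = 2`. -/
theorem dunkl_williams_inner_product {X : Type*} [NormedAddCommGroup X]
    [InnerProductSpace ℝ X] :
    (∀ x y : X, x ≠ 0 → y ≠ 0 →
      ‖‖x‖⁻¹ • x - ‖y‖⁻¹ • y‖ ≤ 2 * ‖x - y‖ / (‖x‖ + ‖y‖)) ∧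
    (Nontrivial X →
      sSup {c : ℝ | ∃ x y : X, x ≠ 0 ∧ y ≠ 0 ∧ x ≠ y ∧
        c = (‖x‖ + ‖y‖) / ‖x - y‖ * ‖‖x‖⁻¹ • x - ‖y‖⁻¹ • y‖} = 2) := by
  have key : ∀ x y : X, x ≠ 0 → y ≠ 0 →
      ‖‖x‖⁻¹ • x - ‖y‖⁻¹ • y‖ ≤ 2 * ‖x - y‖ / (‖x‖ + ‖y‖) := by
    intro x y hx hy
    have ha : (0:ℝ) < ‖x‖ := norm_pos_iff.mpr hx
    have hb : (0:ℝ) < ‖y‖ := norm_pos_iff.mpr hy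
    set a := ‖x‖ with ha'
    set b := ‖y‖ with hb'
    set t := (inner ℝ x y : ℝ) with ht
    have hcs : |t| ≤ a * b := abs_real_inner_le_norm x y
    have habs := abs_le.mp hcs
    set N := ‖a⁻¹ • x - b⁻¹ • y‖ with hNdef
    set D := ‖x - y‖ with hDdef
    have hD : D ^ 2 = a ^ 2 - 2 * t + b ^ 2 := by
      rw [hDdef, @norm_sub_sq_real]
    have hN : N ^ 2 * (a * b) = 2 * (a * b) - 2 * t := by
      rw [hNdef, @norm_sub_sq_real, norm_smul, norm_smul, real_inner_smul_left,
        real_inner_smul_right]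
      rw [Real.norm_eq_abs, Real.norm_eq_abs, abs_of_pos (inv_pos.mpr ha),
        abs_of_pos (inv_pos.mpr hb)]
      field_simp
      rw [ht]; ring
    have hN0 : 0 ≤ N := norm_nonneg _
    have hD0 : 0 ≤ D := norm_nonneg _
    have hab : 0 < a * b := mul_pos ha hb
    have hsq : (N * (a + b)) ^ 2 ≤ (2 * D) ^ 2 := by
      have h3 : (2 * (a * b) - 2 * t) * (a + b) ^ 2 ≤ 4 * (a ^ 2 - 2 * t + b ^ 2) * (a * b) := by
        nlinarith [mul_nonneg (by linarith : (0:ℝ) ≤ t + a * b) (sq_nonneg (a - b))]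
      have h4 : N ^ 2 * (a * b) * (a + b) ^ 2 ≤ 4 * D ^ 2 * (a * b) := by
        rw [hN, hD]; linarith
      nlinarith [h4, hab]
    have := Real.sqrt_le_sqrt hsq
    rw [le_div_iff₀ (by positivity)]
    have h5 := Real.sqrt_le_sqrt hsq
    rw [Real.sqrt_sq (by positivity), Real.sqrt_sq (by positivity)] at h5
    linarith
  refine ⟨key, fun hnt => ?_⟩
  have hub : ∀ c ∈ {c : ℝ | ∃ x y : X, x ≠ 0 ∧ y ≠ 0 ∧ x ≠ y ∧
      c = (‖x‖ + ‖y‖) / ‖x - y‖ * ‖‖x‖⁻¹ • x - ‖y‖⁻¹ • y‖}, c ≤ 2 := by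
    rintro c ⟨x, y, hx, hy, hxy, rfl⟩
    have hxyn : 0 < ‖x - y‖ := by rwa [norm_pos_iff, sub_ne_zero]
    have ha : (0:ℝ) < ‖x‖ := norm_pos_iff.mpr hx
    have hb : (0:ℝ) < ‖y‖ := norm_pos_iff.mpr hy
    rw [div_mul_eq_mul_div, div_le_iff₀ hxyn]
    have := (le_div_iff₀ (by positivity)).mp (key x y hx hy)
    nlinarith
  have hmem : (2:ℝ) ∈ {c : ℝ | ∃ x y : X, x ≠ 0 ∧ y ≠ 0 ∧ x ≠ y ∧
      c = (‖x‖ + ‖y‖) / ‖x - y‖ * ‖‖x‖⁻¹ • x - ‖y‖⁻¹ • y‖} := by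
    obtain ⟨x, hx⟩ := exists_ne (0:X)
    have ha : (0:ℝ) < ‖x‖ := norm_pos_iff.mpr hx
    refine ⟨x, -x, hx, neg_ne_zero.mpr hx, ?_, ?_⟩
    · intro h'
      apply hx
      have : (2:ℝ) • x = 0 := by
        rw [two_smul]; nth_rewrite 2 [h']; simp
      simpa using this
    · have e0 : x - -x = (2:ℝ) • x := by rw [sub_neg_eq_add, two_smul]
      have e1 : ‖x‖⁻¹ • x - ‖x‖⁻¹ • (-x) = (2 * ‖x‖⁻¹) • x := by
        rw [smul_neg, sub_neg_eq_add, ← two_smul ℝ, smul_smul]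
      rw [norm_neg, e0, e1, norm_smul, norm_smul, Real.norm_eq_abs, Real.norm_eq_abs,
        abs_of_pos (by norm_num : (0:ℝ) < 2), abs_of_pos (by positivity : (0:ℝ) < 2 * ‖x‖⁻¹)]
      field_simp
      ring
  apply le_antisymm
  · exact csSup_le ⟨2, hmem⟩ hub
  · exact le_csSup ⟨2, hub⟩ hmem
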